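/- Under Assumptions 1, 2 and 3, the identity map on X_c = X̂_c is a feedback refinement relation from the composed abstraction S_c (built from the decomposition (I_σ^c, I_σ, J_σ)_{σ∈Σ}) to the composed abstraction Ŝ_c (built from the decomposition (Î_σ̂^c, Î_σ̂, Ĵ_σ̂)_{σ̂∈Σ̂}); in particular δ_c(s,u) ⊆ δ̂_c(s,u) for all s ∈ X_c^0 and u ∈ U_c. -/
import Mathlib


open Set Function

/-- `ℝⁿ` modeled as `Fin n → ℝ`. -/
abbrev Vec (n : ℕ) : Type := Fin n → ℝ

/-- Projection `π_{I'}` of a dependent tuple onto the components with indices in `I'`. -/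
def proj {ι : Type*} (E : ι → Type*) (I' : Set ι) (x : (i : ι) → E i) : (i : I') → E i.1 :=
  fun i => x i.1

/-- `P` is a finite partition of `A`: finitely many nonempty pairwise disjoint cells covering `A`. -/
def IsFinPartition {α : Type*} (P : Set (Set α)) (A : Set α) : Prop :=
  P.Finite ∧ (∀ s ∈ P, s.Nonempty) ∧ ⋃₀ P = A ∧
    ∀ s ∈ P, ∀ t ∈ P, s ≠ t → Disjoint s t

/-- The family `A : τ → Set α` is a partition of the index type `α`. -/
def IsIndexPartition {τ α : Type*} (A : τ → Set α) : Prop :=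
  (⋃ σ, A σ) = Set.univ ∧ Pairwise (Disjoint on A)

/-- The set `𝒫` of cells `s₁ × ⋯ × s_n̄`, `s_i ∈ 𝒫_i`, of the product partition. -/
def cells {ι : Type*} {E : ι → Type*} (P : (i : ι) → Set (Set (E i))) :
    Set (Set ((i : ι) → E i)) :=
  { s | ∃ f : (i : ι) → Set (E i), (∀ i, f i ∈ P i) ∧ s = Set.pi Set.univ f }

/-- The set `X_σ⁰` of cells `∏_{i ∈ I'} s_i`, `s_i ∈ 𝒫_i`, of the partition restricted to `I'`. -/
def cellsOn {ι : Type*} {E : ι → Type*} (P : (i : ι) → Set (Set (E i))) (I' : Set ι) :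
    Set (Set ((i : I') → E i.1)) :=
  { s | ∃ f : (i : ι) → Set (E i), (∀ i, f i ∈ P i) ∧
        s = Set.pi Set.univ (fun i : I' => f i.1) }

/-- `F(𝒳',𝒰') = ⋃_{x ∈ 𝒳', u ∈ 𝒰'} F(x,u)`. -/
def Fset {X U : Type*} (F : X → U → Set X) (A : Set X) (B : Set U) : Set X :=
  ⋃ x ∈ A, ⋃ u ∈ B, F x u

/-- `Φ_σ(s_σ,u_σ) = F̄(𝒳 ∩ π_{I_σ}⁻¹(s_σ), 𝒰 ∩ π_{J_σ}⁻¹({u_σ}))`. -/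
def Phi {ι κ : Type*} (E : ι → Type*) (Fu : κ → Type*)
    (Fbar : Set ((i : ι) → E i) → Set ((j : κ) → Fu j) → Set ((i : ι) → E i))
    (Xset : Set ((i : ι) → E i)) (Uset : Set ((j : κ) → Fu j))
    (Iσ : Set ι) (Jσ : Set κ)
    (sσ : Set ((i : Iσ) → E i.1)) (uσ : (j : Jσ) → Fu j.1) : Set ((i : ι) → E i) :=
  Fbar (Xset ∩ proj E Iσ ⁻¹' sσ) (Uset ∩ proj Fu Jσ ⁻¹' {uσ})

/-- `Out_σ = π_{I_σ}(ℝⁿ) \ 𝒳_{I_σ}`. -/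
def OutOf {ι : Type*} (E : ι → Type*) (Iσ : Set ι) (Xset : Set ((i : ι) → E i)) :
    Set ((i : Iσ) → E i.1) :=
  proj E Iσ '' Set.univ \ proj E Iσ '' Xset

/-- Transition map `δ_σ` of the symbolic subsystem `S_σ`. -/
def deltaSub {ι κ : Type*} (E : ι → Type*) (Fu : κ → Type*)
    (Fbar : Set ((i : ι) → E i) → Set ((j : κ) → Fu j) → Set ((i : ι) → E i))
    (Xset : Set ((i : ι) → E i)) (Uset : Set ((j : κ) → Fu j))
    (P : (i : ι) → Set (Set (E i))) (V : (j : κ) → Set (Fu j))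
    (Iσ Icσ : Set ι) (Jσ : Set κ)
    (sσ : Set ((i : Iσ) → E i.1)) (uσ : (j : Jσ) → Fu j.1) :
    Set (Set ((i : Iσ) → E i.1)) :=
  { s' | sσ ∈ cellsOn P Iσ ∧ uσ ∈ Set.pi Set.univ (fun j : Jσ => V j.1) ∧
      ((s' ∈ cellsOn P Iσ ∧
          (s' ∩ proj E Iσ '' Phi E Fu Fbar Xset Uset Iσ Jσ sσ uσ).Nonempty) ∨
        (s' = OutOf E Iσ Xset ∧
          (proj E Iσ '' Phi E Fu Fbar Xset Uset Iσ Jσ sσ uσ ∩ proj E Iσ '' Xset = ∅ ∨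
            ¬proj E Icσ '' Phi E Fu Fbar Xset Uset Iσ Jσ sσ uσ ⊆ proj E Icσ '' Xset))) }

/-- Transition map `δ_c` of the composed abstraction `S_c`. -/
def deltaC {ι κ τ : Type*} (E : ι → Type*) (Fu : κ → Type*)
    (Fbar : Set ((i : ι) → E i) → Set ((j : κ) → Fu j) → Set ((i : ι) → E i))
    (Xset : Set ((i : ι) → E i)) (Uset : Set ((j : κ) → Fu j))
    (P : (i : ι) → Set (Set (E i))) (V : (j : κ) → Set (Fu j))
    (Im Ic : τ → Set ι) (Jm : τ → Set κ)
    (s : Set ((i : ι) → E i)) (u : (j : κ) → Fu j) :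
    Set (Set ((i : ι) → E i)) :=
  { s' | s ∈ cells P ∧ u ∈ Set.pi Set.univ V ∧
      ((s' ∈ cells P ∧ ∀ σ : τ,
          proj E (Im σ) '' s' ∈
            deltaSub E Fu Fbar Xset Uset P V (Im σ) (Ic σ) (Jm σ)
              (proj E (Im σ) '' s) (proj Fu (Jm σ) u)) ∨
        (s' = Xsetᶜ ∧ ∃ σ : τ,
          OutOf E (Im σ) Xset ∈
            deltaSub E Fu Fbar Xset Uset P V (Im σ) (Ic σ) (Jm σ)
              (proj E (Im σ) '' s) (proj Fu (Jm σ) u))) }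

/-- Safety controller for the transition map `δ` and the safe set `safe`. -/
def IsSafetyController {X U : Type*} (δ : X → U → Set X) (safe : Set X) (C : X → Set U) : Prop :=
  (∀ x, ∀ u ∈ C x, (δ x u).Nonempty) ∧
  (∀ x, (C x).Nonempty → x ∈ safe) ∧
  (∀ x, ∀ u ∈ C x, ∀ x', x' ∈ δ x u → (C x').Nonempty)

/-- Maximal safety controller. -/
def IsMaximalSafetyController {X U : Type*} (δ : X → U → Set X) (safe : Set X)
    (Cstar : X → Set U) : Prop :=
  IsSafetyController δ safe Cstar ∧
    ∀ C, IsSafetyController δ safe C → ∀ x, C x ⊆ Cstar x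

/-- Feedback refinement relation (over a common input type). -/
def IsFeedbackRefinement {Xa Xb U : Type*} (δa : Xa → U → Set Xa) (δb : Xb → U → Set Xb)
    (H : Xa → Xb) : Prop :=
  ∀ xa : Xa,
    (∀ u, (δb (H xa) u).Nonempty → (δa xa u).Nonempty) ∧
    (∀ u, (δb (H xa) u).Nonempty → H '' δa xa u ⊆ δb (H xa) u)

/-- Concrete transition map of `S = (ℝⁿ, 𝒰, F)` (inputs restricted to `𝒰`). -/
def deltaConc {X U : Type*} (F : X → U → Set X) (Uset : Set U) (x : X) (u : U) : Set X :=
  { x' | u ∈ Uset ∧ x' ∈ F x u }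

section Helpers
variable {ι : Type*} {E : ι → Type*}

variable {ι : Type*} {E : ι → Type*}

lemma proj_image_pi [∀ i, Nonempty (E i)] (I' : Set ι) {f : (i : ι) → Set (E i)}
    (hf : ∀ i, (f i).Nonempty) :
    proj E I' '' Set.pi Set.univ f = Set.pi Set.univ (fun i : I' => f i.1) := by
  ext z
  constructor
  · rintro ⟨x, hx, rfl⟩ i _
    exact hx i.1 trivial
  · intro hz
    classical
    refine ⟨fun i => if h : i ∈ I' then z ⟨i, h⟩ else (hf i).some, fun i _ => ?_, ?_⟩
    · by_cases h : i ∈ I'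
      · simp only [dif_pos h]; exact hz ⟨i, h⟩ trivial
      · simp only [dif_neg h]; exact (hf i).some_mem
    · funext i
      simp only [proj, dif_pos i.2]

lemma exists_notmem {𝒳i : (i : ι) → Set (E i)} [∀ i, Nonempty (E i)]
    (hX : ∀ i, (𝒳i i).Nonempty) (I' : Set ι) (x : (i : ι) → E i)
    (h : proj E I' x ∉ proj E I' '' Set.pi Set.univ 𝒳i) : ∃ i ∈ I', x i ∉ 𝒳i i := by
  by_contra hc
  push_neg at hc
  classical
  refine h ⟨fun i => if h : i ∈ I' then x i else (hX i).some, fun i _ => ?_, ?_⟩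
  · by_cases h : i ∈ I'
    · simp only [dif_pos h]; exact hc i h
    · simp only [dif_neg h]; exact (hX i).some_mem
  · funext i
    simp only [proj, dif_pos i.2]

lemma proj_notmem {𝒳i : (i : ι) → Set (E i)} {I' : Set ι} {x : (i : ι) → E i} {i : ι}
    (hi : i ∈ I') (hx : x i ∉ 𝒳i i) :
    proj E I' x ∉ proj E I' '' Set.pi Set.univ 𝒳i := by
  rintro ⟨y, hy, he⟩
  have : y i = x i := congrFun he ⟨i, hi⟩
  exact hx (this ▸ hy i trivial)

end Helpers

section Main

variable {ι κ : Type*} {E : ι → Type*} {Fu : κ → Type*} [∀ i, Nonempty (E i)]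
  {𝒳i : (i : ι) → Set (E i)} {𝒰j : (j : κ) → Set (Fu j)}
  {F : ((i : ι) → E i) → ((j : κ) → Fu j) → Set ((i : ι) → E i)}
  {Fbar : Set ((i : ι) → E i) → Set ((j : κ) → Fu j) → Set ((i : ι) → E i)}
  {P : (i : ι) → Set (Set (E i))} {V : (j : κ) → Set (Fu j)}

lemma deltaC_subset {τ τ' : Type*}
    {Im Ic : τ → Set ι} {Jm : τ → Set κ}
    {Im' Ic' : τ' → Set ι} {Jm' : τ' → Set κ}
    (hF : ∀ x u, u ∈ Set.pi Set.univ 𝒰j → (F x u).Nonempty)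
    (hFbar : ∀ A B, Fset F A B ⊆ Fbar A B)
    (hP : ∀ i, IsFinPartition (P i) (𝒳i i))
    (hV : ∀ j, (V j).Finite ∧ V j ⊆ 𝒰j j)
    (hIc : IsIndexPartition Ic)
    (hIc' : IsIndexPartition Ic')
    (γ : τ' → τ)
    (hA2 : ∀ σ', Ic' σ' ⊆ Ic (γ σ') ∧ Im' σ' ⊆ Im (γ σ') ∧ Jm' σ' ⊆ Jm (γ σ'))
    (hMono : ∀ A A' B B', A ⊆ A' → B ⊆ B' → B' ⊆ Set.pi Set.univ 𝒰j → Fbar A B ⊆ Fbar A' B')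
    (s : Set ((i : ι) → E i)) (u : (j : κ) → Fu j) :
    deltaC E Fu Fbar (Set.pi Set.univ 𝒳i) (Set.pi Set.univ 𝒰j) P V Im Ic Jm s u ⊆
      deltaC E Fu Fbar (Set.pi Set.univ 𝒳i) (Set.pi Set.univ 𝒰j) P V Im' Ic' Jm' s u := by
  intro s' hs'
  obtain ⟨⟨f, hfP, rfl⟩, hu, hcase⟩ := hs'
  -- basic facts about the cell `s = pi univ f`
  have hfne : ∀ i, (f i).Nonempty := fun i => (hP i).2.1 _ (hfP i)
  have hfsub : ∀ i, f i ⊆ 𝒳i i := fun i => by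
    rw [← (hP i).2.2.1]; exact subset_sUnion_of_mem (hfP i)
  have hXne : ∀ i, (𝒳i i).Nonempty := fun i => (hfne i).mono (hfsub i)
  have hsX : Set.pi Set.univ f ⊆ Set.pi Set.univ 𝒳i :=
    fun x hx i _ => hfsub i (hx i trivial)
  have huU : u ∈ Set.pi Set.univ 𝒰j := fun j _ => (hV j).2 (hu j trivial)
  have sproj : ∀ I' : Set ι,
      proj E I' '' Set.pi Set.univ f = Set.pi Set.univ (fun i : I' => f i.1) :=
    fun I' => proj_image_pi I' hfne
  have hcellsOn : ∀ I' : Set ι, proj E I' '' Set.pi Set.univ f ∈ cellsOn P I' :=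
    fun I' => ⟨f, hfP, sproj I'⟩
  have hupi : ∀ J' : Set κ, proj Fu J' u ∈ Set.pi Set.univ (fun j : J' => V j.1) :=
    fun J' j _ => hu j.1 trivial
  have hPhiF : ∀ (I' : Set ι) (J' : Set κ) (x₀ : (i : ι) → E i), x₀ ∈ Set.pi Set.univ f →
      F x₀ u ⊆ Phi E Fu Fbar (Set.pi Set.univ 𝒳i) (Set.pi Set.univ 𝒰j) I' J'
        (proj E I' '' Set.pi Set.univ f) (proj Fu J' u) := by
    intro I' J' x₀ hx₀
    refine subset_trans ?_ (hFbar _ _)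
    intro y hy
    exact Set.mem_biUnion ⟨hsX hx₀, ⟨x₀, hx₀, rfl⟩⟩
      (Set.mem_biUnion ⟨huU, rfl⟩ hy)
  have hPhiMono : ∀ σ' : τ',
      Phi E Fu Fbar (Set.pi Set.univ 𝒳i) (Set.pi Set.univ 𝒰j) (Im (γ σ')) (Jm (γ σ'))
        (proj E (Im (γ σ')) '' Set.pi Set.univ f) (proj Fu (Jm (γ σ')) u) ⊆
      Phi E Fu Fbar (Set.pi Set.univ 𝒳i) (Set.pi Set.univ 𝒰j) (Im' σ') (Jm' σ')
        (proj E (Im' σ') '' Set.pi Set.univ f) (proj Fu (Jm' σ') u) := by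
    intro σ'
    apply hMono
    · rintro x ⟨hx1, hx2⟩
      refine ⟨hx1, ?_⟩
      rw [sproj] at hx2 ⊢
      intro i _
      exact hx2 ⟨i.1, (hA2 σ').2.1 i.2⟩ trivial
    · rintro u' ⟨hu1, hu2⟩
      refine ⟨hu1, ?_⟩
      have hu2' : proj Fu (Jm (γ σ')) u' = proj Fu (Jm (γ σ')) u := hu2
      show proj Fu (Jm' σ') u' = proj Fu (Jm' σ') u
      funext j
      exact congrFun hu2' ⟨j.1, (hA2 σ').2.2 j.2⟩
    · exact Set.inter_subset_left
  refine ⟨⟨f, hfP, rfl⟩, hu, ?_⟩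
  rcases hcase with ⟨⟨f', hf'P, rfl⟩, hσ⟩ | ⟨rfl, σ, hOut⟩
  · -- cell-to-cell transitions
    have hf'ne : ∀ i, (f' i).Nonempty := fun i => (hP i).2.1 _ (hf'P i)
    have hf'sub : ∀ i, f' i ⊆ 𝒳i i := fun i => by
      rw [← (hP i).2.2.1]; exact subset_sUnion_of_mem (hf'P i)
    refine Or.inl ⟨⟨f', hf'P, rfl⟩, fun σ' => ?_⟩
    obtain ⟨_, _, hor⟩ := hσ (γ σ')
    have hne : ((proj E (Im (γ σ')) '' Set.pi Set.univ f') ∩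
        proj E (Im (γ σ')) '' Phi E Fu Fbar (Set.pi Set.univ 𝒳i) (Set.pi Set.univ 𝒰j)
          (Im (γ σ')) (Jm (γ σ')) (proj E (Im (γ σ')) '' Set.pi Set.univ f)
          (proj Fu (Jm (γ σ')) u)).Nonempty := by
      rcases hor with ⟨_, h⟩ | ⟨heq, _⟩
      · exact h
      · exfalso
        obtain ⟨x', hx'⟩ : (Set.pi Set.univ f').Nonempty :=
          Set.univ_pi_nonempty_iff.2 hf'ne
        have hmem : proj E (Im (γ σ')) x' ∈ OutOf E (Im (γ σ')) (Set.pi Set.univ 𝒳i) :=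
          heq ▸ ⟨x', hx', rfl⟩
        exact hmem.2 ⟨x', fun i _ => hf'sub i (hx' i trivial), rfl⟩
    obtain ⟨p, ⟨y, hy, hpy⟩, ⟨x, hx, hpx⟩⟩ := hne
    refine ⟨hcellsOn _, hupi _, Or.inl ⟨⟨f', hf'P, proj_image_pi _ hf'ne⟩, ?_⟩⟩
    refine ⟨proj E (Im' σ') x, ⟨y, hy, ?_⟩, ⟨x, hPhiMono σ' hx, rfl⟩⟩
    funext i
    exact congrFun (hpy.trans hpx.symm) ⟨i.1, (hA2 σ').2.1 i.2⟩
  · -- transitions to Out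
    obtain ⟨_, _, hor⟩ := hOut
    have hout : (proj E (Im σ) '' Phi E Fu Fbar (Set.pi Set.univ 𝒳i) (Set.pi Set.univ 𝒰j)
          (Im σ) (Jm σ) (proj E (Im σ) '' Set.pi Set.univ f) (proj Fu (Jm σ) u) ∩
          proj E (Im σ) '' Set.pi Set.univ 𝒳i = ∅) ∨
        ¬ proj E (Ic σ) '' Phi E Fu Fbar (Set.pi Set.univ 𝒳i) (Set.pi Set.univ 𝒰j)
          (Im σ) (Jm σ) (proj E (Im σ) '' Set.pi Set.univ f) (proj Fu (Jm σ) u) ⊆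
          proj E (Ic σ) '' Set.pi Set.univ 𝒳i := by
      rcases hor with ⟨⟨g, hgP, hgeq⟩, ⟨q, hqOut, _⟩⟩ | ⟨_, h⟩
      · exfalso
        have hgsub : ∀ i, g i ⊆ 𝒳i i := fun i => by
          rw [← (hP i).2.2.1]; exact subset_sUnion_of_mem (hgP i)
        have hq : q ∈ Set.pi Set.univ (fun i : Im σ => g i.1) := by
          have := hqOut
          rw [hgeq] at this
          exact this
        classical
        refine hqOut.2 ⟨fun i => if h : i ∈ Im σ then q ⟨i, h⟩ else (hXne i).some,
          fun i _ => ?_, ?_⟩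
        · by_cases h : i ∈ Im σ
          · simp only [dif_pos h]; exact hgsub i (hq ⟨i, h⟩ trivial)
          · simp only [dif_neg h]; exact (hXne i).some_mem
        · funext i
          simp only [proj, dif_pos i.2]
      · exact h
    have key : ∃ σ' : τ', ∃ x ∈ Phi E Fu Fbar (Set.pi Set.univ 𝒳i) (Set.pi Set.univ 𝒰j)
        (Im' σ') (Jm' σ') (proj E (Im' σ') '' Set.pi Set.univ f) (proj Fu (Jm' σ') u),
        ∃ i ∈ Ic' σ', x i ∉ 𝒳i i := by
      rcases hout with hemp | hnsub
      · obtain ⟨x₀, hx₀⟩ : (Set.pi Set.univ f).Nonempty := Set.univ_pi_nonempty_iff.2 hfne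
        obtain ⟨x, hx⟩ := hF x₀ u huU
        have hxΦ := hPhiF (Im σ) (Jm σ) x₀ hx₀ hx
        have hnx : proj E (Im σ) x ∉ proj E (Im σ) '' Set.pi Set.univ 𝒳i := by
          intro hmem
          exact Set.eq_empty_iff_forall_notMem.1 hemp _ ⟨⟨x, hxΦ, rfl⟩, hmem⟩
        obtain ⟨i, _, hxi⟩ := exists_notmem hXne (Im σ) x hnx
        obtain ⟨σ', hiσ'⟩ : ∃ σ', i ∈ Ic' σ' := by
          have : i ∈ ⋃ σ', Ic' σ' := hIc'.1.symm ▸ Set.mem_univ i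
          exact Set.mem_iUnion.1 this
        exact ⟨σ', x, hPhiF (Im' σ') (Jm' σ') x₀ hx₀ hx, i, hiσ', hxi⟩
      · obtain ⟨p, ⟨x, hxΦ, rfl⟩, hpB⟩ := Set.not_subset.1 hnsub
        obtain ⟨i, hiIc, hxi⟩ := exists_notmem hXne (Ic σ) x hpB
        obtain ⟨σ', hiσ'⟩ : ∃ σ', i ∈ Ic' σ' := by
          have : i ∈ ⋃ σ', Ic' σ' := hIc'.1.symm ▸ Set.mem_univ i
          exact Set.mem_iUnion.1 this
        have hγσ : γ σ' = σ := by
          by_contra hne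
          exact Set.disjoint_left.1 (hIc.2 hne) ((hA2 σ').1 hiσ') hiIc
        refine ⟨σ', x, hPhiMono σ' ?_, i, hiσ', hxi⟩
        rw [hγσ]
        exact hxΦ
    obtain ⟨σ', x, hxΦ', i, hiσ', hxi⟩ := key
    refine Or.inr ⟨rfl, σ', hcellsOn _, hupi _, Or.inr ⟨rfl, Or.inr ?_⟩⟩
    intro hsub
    exact proj_notmem hiσ' hxi (hsub ⟨x, hxΦ', rfl⟩)

end Main


theorem stmt5
    {ι κ τ : Type*} [Finite ι] [Finite κ] [Finite τ]
    (nd : ι → ℕ) (pd : κ → ℕ)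
    (𝒳i : (i : ι) → Set (Vec (nd i))) (𝒰j : (j : κ) → Set (Vec (pd j)))
    (F : ((i : ι) → Vec (nd i)) → ((j : κ) → Vec (pd j)) → Set ((i : ι) → Vec (nd i)))
    (Fbar : Set ((i : ι) → Vec (nd i)) → Set ((j : κ) → Vec (pd j)) →
      Set ((i : ι) → Vec (nd i)))
    (P : (i : ι) → Set (Set (Vec (nd i)))) (V : (j : κ) → Set (Vec (pd j)))
    (Im Ic : τ → Set ι) (Jm : τ → Set κ)
    (hF : ∀ x u, u ∈ Set.pi Set.univ 𝒰j → (F x u).Nonempty)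
    (hFbar : ∀ A B, Fset F A B ⊆ Fbar A B)
    (hP : ∀ i, IsFinPartition (P i) (𝒳i i))
    (hV : ∀ j, (V j).Finite ∧ V j ⊆ 𝒰j j)
    (hIc : IsIndexPartition Ic) (hIcne : ∀ σ, (Ic σ).Nonempty) (hIcIm : ∀ σ, Ic σ ⊆ Im σ)
    (hJ : IsIndexPartition Jm) (hJne : ∀ σ, (Jm σ).Nonempty)
    {τ' : Type*} [Finite τ']
    (Im' Ic' : τ' → Set ι) (Jm' : τ' → Set κ)
    (hIc' : IsIndexPartition Ic') (hIcne' : ∀ σ', (Ic' σ').Nonempty)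
    (hIcIm' : ∀ σ', Ic' σ' ⊆ Im' σ')
    (hJ' : IsIndexPartition Jm') (hJne' : ∀ σ', (Jm' σ').Nonempty)
    (γ : τ' → τ) (hγ : Function.Surjective γ)
    (hA2 : ∀ σ', Ic' σ' ⊆ Ic (γ σ') ∧ Im' σ' ⊆ Im (γ σ') ∧ Jm' σ' ⊆ Jm (γ σ'))
    (hMono : ∀ A A' B B', A ⊆ A' → B ⊆ B' → B' ⊆ Set.pi Set.univ 𝒰j → Fbar A B ⊆ Fbar A' B') :
    IsFeedbackRefinement (deltaC (fun i => Vec (nd i)) (fun j => Vec (pd j)) Fbar (Set.pi Set.univ 𝒳i) (Set.pi Set.univ 𝒰j) P V Im Ic Jm) (deltaC (fun i => Vec (nd i)) (fun j => Vec (pd j)) Fbar (Set.pi Set.univ 𝒳i) (Set.pi Set.univ 𝒰j) P V Im' Ic' Jm') id ∧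
      ∀ s ∈ cells P, ∀ u ∈ Set.pi Set.univ V,
        deltaC (fun i => Vec (nd i)) (fun j => Vec (pd j)) Fbar (Set.pi Set.univ 𝒳i) (Set.pi Set.univ 𝒰j) P V Im Ic Jm s u ⊆ deltaC (fun i => Vec (nd i)) (fun j => Vec (pd j)) Fbar (Set.pi Set.univ 𝒳i) (Set.pi Set.univ 𝒰j) P V Im' Ic' Jm' s u := by
  have hsub := fun s u => deltaC_subset (F := F) hF hFbar hP hV hIc hIc' γ hA2 hMono s u
  refine ⟨fun xa => ⟨?_, ?_⟩, fun s _ u _ => hsub s u⟩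
  · rintro u ⟨t, hs, hu, -⟩
    have heq' : ∃ f : (i : ι) → Set (Vec (nd i)), (∀ i, f i ∈ P i) ∧ xa = Set.pi Set.univ f := hs
    obtain ⟨f, hfP, rfl⟩ := heq'
    have hfne : ∀ i, (f i).Nonempty := fun i => (hP i).2.1 _ (hfP i)
    have hfsub : ∀ i, f i ⊆ 𝒳i i := fun i => by
      rw [← (hP i).2.2.1]; exact subset_sUnion_of_mem (hfP i)
    have hsX : Set.pi Set.univ f ⊆ Set.pi Set.univ 𝒳i :=
      fun x hx i _ => hfsub i (hx i trivial)
    have huU : u ∈ Set.pi Set.univ 𝒰j := fun j _ => (hV j).2 (hu j trivial)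
    have hcellsOn : ∀ I' : Set ι,
        proj (fun i => Vec (nd i)) I' '' Set.pi Set.univ f ∈ cellsOn P I' :=
      fun I' => ⟨f, hfP, proj_image_pi I' hfne⟩
    have hupi : ∀ J' : Set κ,
        proj (fun j => Vec (pd j)) J' u ∈ Set.pi Set.univ (fun j : J' => V j.1) :=
      fun J' j _ => hu j.1 trivial
    have hPhiF : ∀ (I' : Set ι) (J' : Set κ) x₀, x₀ ∈ Set.pi Set.univ f →
        F x₀ u ⊆ Phi (fun i => Vec (nd i)) (fun j => Vec (pd j)) Fbar
          (Set.pi Set.univ 𝒳i) (Set.pi Set.univ 𝒰j) I' J'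
          (proj (fun i => Vec (nd i)) I' '' Set.pi Set.univ f)
          (proj (fun j => Vec (pd j)) J' u) := by
      intro I' J' x₀ hx₀
      refine subset_trans ?_ (hFbar _ _)
      intro y hy
      exact Set.mem_biUnion ⟨hsX hx₀, ⟨x₀, hx₀, rfl⟩⟩ (Set.mem_biUnion ⟨huU, rfl⟩ hy)
    obtain ⟨x₀, hx₀⟩ : (Set.pi Set.univ f).Nonempty := Set.univ_pi_nonempty_iff.2 hfne
    obtain ⟨x, hx⟩ := hF x₀ u huU
    by_cases hxX : x ∈ Set.pi Set.univ 𝒳i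
    · have hch : ∀ i, ∃ t ∈ P i, x i ∈ t :=
        fun i => Set.mem_sUnion.1 ((hP i).2.2.1.symm ▸ hxX i trivial)
      choose g hgP hxg using hch
      have hgne : ∀ i, (g i).Nonempty := fun i => ⟨x i, hxg i⟩
      refine ⟨Set.pi Set.univ g, ⟨f, hfP, rfl⟩, hu, Or.inl ⟨⟨g, hgP, rfl⟩, fun σ => ?_⟩⟩
      refine ⟨hcellsOn _, hupi _, Or.inl ⟨⟨g, hgP, proj_image_pi _ hgne⟩, ?_⟩⟩
      exact ⟨proj _ (Im σ) x, ⟨x, fun i _ => hxg i, rfl⟩,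
        ⟨x, hPhiF (Im σ) (Jm σ) x₀ hx₀ hx, rfl⟩⟩
    · obtain ⟨i, hxi⟩ : ∃ i, x i ∉ 𝒳i i := by
        by_contra hc; push_neg at hc; exact hxX fun i _ => hc i
      obtain ⟨σ, hiσ⟩ : ∃ σ, i ∈ Ic σ := Set.mem_iUnion.1 (hIc.1.symm ▸ Set.mem_univ i)
      refine ⟨(Set.pi Set.univ 𝒳i)ᶜ, ⟨f, hfP, rfl⟩, hu,
        Or.inr ⟨rfl, σ, hcellsOn _, hupi _, Or.inr ⟨rfl, Or.inr ?_⟩⟩⟩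
      intro hss
      exact proj_notmem hiσ hxi (hss ⟨x, hPhiF (Im σ) (Jm σ) x₀ hx₀ hx, rfl⟩)
  · intro u _
    rw [Set.image_id]
    exact hsub xa u
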